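/- Define the representation vulnerability RV_ε(g) = sup over μ_{X'} ∈ B_{W∞}(μ_X, ε) of [I(X; g(X)) - I(X'; g(X'))]. Then under the uniform-label assumption, inf over downstream classifiers h of AdvRisk_ε(h ∘ g) ≥ 1 - (I(X; g(X)) - RV_ε(g) + log 2) / log |𝒴|. -/

import Mathlib

open Finset

attribute [local instance] Classical.propDecidable

/-- Probability of an event under a probability mass function `μ` on a finite sample space. -/
noncomputable def pr {Ω : Type*} [Fintype Ω] (μ : Ω → ℝ) (E : Set Ω) : ℝ :=
  ∑ ω, if ω ∈ E then μ ω else 0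

/-- Shannon entropy (natural log) of the random variable `X` under the pmf `μ`. -/
noncomputable def entropy {Ω α : Type*} [Fintype Ω] (μ : Ω → ℝ) (X : Ω → α) : ℝ :=
  -∑ a ∈ Finset.image X Finset.univ,
      pr μ {ω | X ω = a} * Real.log (pr μ {ω | X ω = a})

/-- Mutual information `I(X;Y) = H(X) + H(Y) - H(X,Y)` under the pmf `μ`. -/
noncomputable def mutualInfo {Ω α β : Type*} [Fintype Ω] (μ : Ω → ℝ)
    (X : Ω → α) (Y : Ω → β) : ℝ :=
  entropy μ X + entropy μ Y - entropy μ (fun ω => (X ω, Y ω))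

/-- `X → Y → Z` is a Markov chain: `X` and `Z` are conditionally independent given `Y`. -/
noncomputable def MarkovChain {Ω α β γ : Type*} [Fintype Ω] (μ : Ω → ℝ)
    (X : Ω → α) (Y : Ω → β) (Z : Ω → γ) : Prop :=
  ∀ (x : α) (y : β) (z : γ),
    pr μ {ω | X ω = x ∧ Y ω = y ∧ Z ω = z} * pr μ {ω | Y ω = y}
      = pr μ {ω | X ω = x ∧ Y ω = y} * pr μ {ω | Y ω = y ∧ Z ω = z}

/-- Mutual information `I(X; g(X))` where `X` is distributed according to the pmf `ν`. -/
noncomputable def MI {𝒳 𝒵 : Type*} [Fintype 𝒳] (ν : 𝒳 → ℝ) (g : 𝒳 → 𝒵) : ℝ :=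
  mutualInfo ν id g

/-- `ν'` lies in the `∞`-Wasserstein ball of radius `ε` around `ν`: there is a coupling of
`ν` and `ν'` supported on pairs at distance at most `ε`. -/
def InWinfBall {𝒳 : Type*} [Fintype 𝒳] [MetricSpace 𝒳] (ν ν' : 𝒳 → ℝ) (ε : ℝ) : Prop :=
  ∃ γ : 𝒳 × 𝒳 → ℝ, (∀ p, 0 ≤ γ p) ∧ (∀ x, ∑ x', γ (x, x') = ν x) ∧
    (∀ x', ∑ x, γ (x, x') = ν' x') ∧ (∀ p, γ p ≠ 0 → dist p.1 p.2 ≤ ε)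

/-- Representation vulnerability:
`RV_ε(g) = sup_{ν' ∈ B_{W∞}(ν, ε)} [I(X; g(X)) - I(X'; g(X'))]`. -/
noncomputable def RV {𝒳 𝒵 : Type*} [Fintype 𝒳] [MetricSpace 𝒳]
    (ν : 𝒳 → ℝ) (ε : ℝ) (g : 𝒳 → 𝒵) : ℝ :=
  sSup {r : ℝ | ∃ ν' : 𝒳 → ℝ, (∀ x, 0 ≤ ν' x) ∧ (∑ x, ν' x = 1) ∧
    InWinfBall ν ν' ε ∧ r = MI ν g - MI ν' g}

private lemma logK_le (K : ℝ) (hK : 2 ≤ K) : Real.log K ≤ K * Real.log 2 := by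
  have h1 : Real.log (K / 2) ≤ K / 2 - 1 := Real.log_le_sub_one_of_pos (by linarith)
  have h2 : Real.log K = Real.log (K / 2) + Real.log 2 := by
    rw [← Real.log_mul (by positivity) (by norm_num)]
    norm_num
  have hl2 : (0.6931471803 : ℝ) < Real.log 2 := Real.log_two_gt_d9
  nlinarith

private lemma key_min_le {K p : ℝ} (hK : 2 ≤ K) (hp0 : 0 ≤ p) (hp1 : p ≤ 1) :
    min p (1 / K) * Real.log K ≤ p * Real.log 2 + Real.negMulLog p := by
  have hK0 : (0 : ℝ) < K := by linarith
  have hlogK : 0 ≤ Real.log K := Real.log_nonneg (by linarith)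
  have hlog2 : 0 < Real.log 2 := Real.log_pos (by norm_num)
  have hKl := logK_le K hK
  rcases le_or_gt p (1 / K) with hle | hgt
  · rw [min_eq_left hle]
    rcases eq_or_lt_of_le hp0 with h0 | h0
    · simp [← h0, Real.negMulLog]
    · have hKp : K * p ≤ 2 := by
        have : K * p ≤ K * (1 / K) := by nlinarith
        rw [mul_one_div, div_self (ne_of_gt hK0)] at this
        linarith
      have hlog : Real.log K + Real.log p ≤ Real.log 2 := by
        rw [← Real.log_mul (ne_of_gt hK0) (ne_of_gt h0)]
        exact Real.log_le_log (by positivity) hKp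
      have : p * (Real.log K + Real.log p) ≤ p * Real.log 2 :=
        mul_le_mul_of_nonneg_left hlog hp0
      simp only [Real.negMulLog]
      nlinarith
  · rw [min_eq_right hgt.le]
    have hKinv : (1 : ℝ) / K < 1 := by
      rw [div_lt_one hK0]; linarith
    have hd : (0 : ℝ) < 1 - 1 / K := by linarith
    set a : ℝ := (1 - p) / (1 - 1 / K) with ha_def
    set b : ℝ := (p - 1 / K) / (1 - 1 / K) with hb_def
    have ha : 0 ≤ a := div_nonneg (by linarith) hd.le
    have hb : 0 ≤ b := div_nonneg (by linarith) hd.le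
    have hab : a + b = 1 := by
      rw [ha_def, hb_def, ← add_div, div_eq_one_iff_eq (ne_of_gt hd)]
      ring
    have hcomb : a * (1 / K) + b * 1 = p := by
      rw [ha_def, hb_def, div_mul_eq_mul_div, mul_one, ← add_div,
        show (1 - p) * (1 / K) + (p - 1 / K) = p * (1 - 1 / K) by ring]
      exact mul_div_cancel_right₀ p hd.ne'
    have hconc := Real.concaveOn_negMulLog.2 (Set.mem_Ici.mpr (by positivity : (0:ℝ) ≤ 1 / K))
      (Set.mem_Ici.mpr zero_le_one) ha hb hab
    rw [smul_eq_mul, smul_eq_mul, smul_eq_mul, smul_eq_mul, Real.negMulLog_one, mul_zero,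
      add_zero, hcomb] at hconc
    have h1K : Real.negMulLog (1 / K) = 1 / K * Real.log K := by
      rw [Real.negMulLog, one_div, Real.log_inv]
      ring
    rw [h1K] at hconc
    have hbp : b ≤ p := by
      rw [hb_def, div_le_iff₀ hd]
      nlinarith [mul_le_mul_of_nonneg_right hp1 (le_of_lt (one_div_pos.mpr hK0))]
    have hlK2 : 1 / K * Real.log K ≤ Real.log 2 := by
      rw [div_mul_eq_mul_div, one_mul, div_le_iff₀ hK0]
      linarith [hKl]
    nlinarith [mul_le_mul_of_nonneg_left hlK2 (sub_nonneg.mpr hbp)]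

private lemma entropy_eq {Ω α : Type*} [Fintype Ω] (μ : Ω → ℝ) (X : Ω → α) :
    entropy μ X = ∑ a ∈ Finset.image X Finset.univ, Real.negMulLog (pr μ {ω | X ω = a}) := by
  rw [entropy, ← Finset.sum_neg_distrib]
  exact Finset.sum_congr rfl fun a _ => by rw [Real.negMulLog, neg_mul]

private lemma pr_nonneg {Ω : Type*} [Fintype Ω] {μ : Ω → ℝ} (h : ∀ ω, 0 ≤ μ ω) (E : Set Ω) :
    0 ≤ pr μ E :=
  Finset.sum_nonneg fun ω _ => by by_cases hE : ω ∈ E <;> simp [hE, h ω]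

private lemma negMulLog_sum_le {α : Type*} (s : Finset α) (q : α → ℝ)
    (hq : ∀ b ∈ s, 0 ≤ q b) :
    Real.negMulLog (∑ b ∈ s, q b) ≤ ∑ b ∈ s, Real.negMulLog (q b) := by
  have h1 : Real.negMulLog (∑ b ∈ s, q b) = ∑ b ∈ s, -(q b * Real.log (∑ c ∈ s, q c)) := by
    rw [Finset.sum_neg_distrib, ← Finset.sum_mul, Real.negMulLog, neg_mul]
  rw [h1]
  apply Finset.sum_le_sum
  intro b hb
  rcases eq_or_lt_of_le (hq b hb) with h0 | h0
  · simp [← h0, Real.negMulLog]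
  · have hbS : q b ≤ ∑ c ∈ s, q c := Finset.single_le_sum hq hb
    have hlog := Real.log_le_log h0 hbS
    rw [Real.negMulLog, neg_mul]
    nlinarith

private lemma pr_single {𝒳 : Type*} [Fintype 𝒳] (ν : 𝒳 → ℝ) (a : 𝒳) :
    pr ν {ω | ω = a} = ν a := by
  rw [pr]
  rw [Finset.sum_congr rfl (fun ω _ => by
    simp only [Set.mem_setOf_eq] : ∀ ω ∈ Finset.univ,
      (if ω ∈ {ω | ω = a} then ν ω else 0) = if ω = a then ν ω else 0)]
  simp [Finset.sum_ite_eq']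

private lemma MI_eq_entropy {𝒳 𝒵 : Type*} [Fintype 𝒳] (ν : 𝒳 → ℝ) (g : 𝒳 → 𝒵) :
    MI ν g = entropy ν g := by
  have hid : entropy ν (id : 𝒳 → 𝒳) = ∑ x, Real.negMulLog (ν x) := by
    rw [entropy_eq]
    rw [Finset.image_id]
    exact Finset.sum_congr rfl fun a _ => by rw [show {ω | id ω = a} = {ω | ω = a} from rfl,
      pr_single]
  have hpair : entropy ν (fun ω => (id ω, g ω)) = ∑ x, Real.negMulLog (ν x) := by
    rw [entropy_eq]
    have hsi := Finset.sum_image (s := (Finset.univ : Finset 𝒳))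
      (g := fun x => (x, g x))
      (f := fun p => Real.negMulLog (pr ν {ω | (ω, g ω) = p}))
      (fun x _ y _ hxy => (Prod.ext_iff.mp hxy).1)
    rw [show (fun ω => (id ω, g ω)) = fun ω => (ω, g ω) from rfl]
    refine (Eq.trans ?_ hsi).trans ?_
    · congr!
    refine Finset.sum_congr rfl fun x _ => ?_
    show (pr ν {ω | (ω, g ω) = (x, g x)}).negMulLog = (ν x).negMulLog
    congr 1
    rw [show {ω | (ω, g ω) = (x, g x)} = {ω | ω = x} from ?_, pr_single]
    ext ω
    simp only [Set.mem_setOf_eq, Prod.mk.injEq, id_eq]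
    exact ⟨fun h => h.1, fun h => ⟨h, by rw [h]⟩⟩
  rw [MI, mutualInfo, hid, hpair]
  ring

private lemma entropy_comp_le {𝒳 𝒴 𝒵 : Type*} [Fintype 𝒳] [Fintype 𝒴]
    (ν : 𝒳 → ℝ) (hν : ∀ x, 0 ≤ ν x) (g : 𝒳 → 𝒵) (h : 𝒵 → 𝒴) :
    entropy ν (fun x => h (g x)) ≤ entropy ν g := by
  rw [entropy_eq, entropy_eq]
  have hfib : ∀ c, pr ν {x | h (g x) = c}
      = ∑ b ∈ (Finset.image g Finset.univ).filter (fun b => h b = c),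
          pr ν {x | g x = b} := by
    intro c
    rw [pr]
    simp only [pr]
    rw [Finset.sum_comm]
    refine Finset.sum_congr rfl fun x _ => ?_
    simp only [Set.mem_setOf_eq]
    by_cases hc : h (g x) = c
    · rw [if_pos hc, Finset.sum_ite_eq, if_pos
        (Finset.mem_filter.mpr ⟨Finset.mem_image_of_mem g (Finset.mem_univ x), hc⟩)]
    · rw [if_neg hc]
      apply (Finset.sum_eq_zero fun b hb => ?_).symm
      rcases Finset.mem_filter.mp hb with ⟨_, hbc⟩
      rw [if_neg]
      intro hgb
      exact hc (hgb ▸ hbc)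
  calc ∑ c ∈ Finset.image (fun x => h (g x)) Finset.univ,
        Real.negMulLog (pr ν {x | h (g x) = c})
      ≤ ∑ c ∈ Finset.image (fun x => h (g x)) Finset.univ,
        ∑ b ∈ (Finset.image g Finset.univ).filter (fun b => h b = c),
          Real.negMulLog (pr ν {x | g x = b}) := by
        refine Finset.sum_le_sum fun c _ => ?_
        rw [hfib c]
        exact negMulLog_sum_le _ _ fun b _ => pr_nonneg hν _
    _ = ∑ b ∈ Finset.image g Finset.univ, Real.negMulLog (pr ν {x | g x = b}) := by
        apply Finset.sum_fiberwise_of_maps_to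
        intro b hb
        rcases Finset.mem_image.mp hb with ⟨x, _, rfl⟩
        exact Finset.mem_image_of_mem _ (Finset.mem_univ x)

/-- **Theorem 3.4 (lower bound on adversarial risk).** If the label marginal is uniform
over a finite label set `𝒴`, then for every downstream classifier `h`,
`AdvRisk_ε(h ∘ g) ≥ 1 - (I(X; g(X)) - RV_ε(g) + log 2) / log |𝒴|`; in particular the
infimum over `h` satisfies this bound. -/
theorem advRisk_lower_bound {𝒳 𝒴 𝒵 : Type*} [Fintype 𝒳] [Fintype 𝒴] [MetricSpace 𝒳]
    (μ : 𝒳 × 𝒴 → ℝ) (hnn : ∀ p, 0 ≤ μ p) (hsum : ∑ p, μ p = 1)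
    (hcard : 2 ≤ Fintype.card 𝒴)
    (hunif : ∀ y : 𝒴, ∑ x, μ (x, y) = 1 / Fintype.card 𝒴)
    (g : 𝒳 → 𝒵) (ε : ℝ) (hε : 0 ≤ ε) :
    ∀ h : 𝒵 → 𝒴,
      1 - (MI (fun x => ∑ y, μ (x, y)) g - RV (fun x => ∑ y, μ (x, y)) ε g + Real.log 2)
            / Real.log (Fintype.card 𝒴)
        ≤ pr μ {p | ∃ x', dist x' p.1 ≤ ε ∧ h (g x') ≠ p.2} := by
  intro h
  set ν : 𝒳 → ℝ := fun x => ∑ y, μ (x, y) with hνdef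
  set K : ℝ := (Fintype.card 𝒴 : ℝ) with hKdef
  have hν0 : ∀ x, 0 ≤ ν x := fun x => Finset.sum_nonneg fun y _ => hnn (x, y)
  have hνx : ∀ x, (∑ y, μ (x, y)) = ν x := fun x => by rw [hνdef]
  have hK2 : (2 : ℝ) ≤ K := by rw [hKdef]; exact_mod_cast hcard
  have hK0 : (0 : ℝ) < K := by linarith
  have hlogK : 0 < Real.log K := Real.log_pos (by linarith)
  have hunif' : ∀ y : 𝒴, ∑ x, μ (x, y) = 1 / K := hunif
  have hν1 : ∑ x, ν x = 1 := by
    rw [← hsum, Fintype.sum_prod_type]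
  set adv := pr μ {p : 𝒳 × 𝒴 | ∃ x', dist x' p.1 ≤ ε ∧ h (g x') ≠ p.2} with hadv
  -- The core Fano-type estimate, for every distribution in the Wasserstein ball.
  have core : ∀ ν' : 𝒳 → ℝ, (∀ x, 0 ≤ ν' x) → (∑ x, ν' x = 1) → InWinfBall ν ν' ε →
      (1 - adv) * Real.log K ≤ MI ν' g + Real.log 2 := by
    rintro ν' hν'0 hν'1 ⟨γ, hγ0, hγ1, hγ2, hγd⟩
    have hμν : ∀ x y, μ (x, y) ≤ ν x := fun x y =>
      (Finset.single_le_sum (fun y _ => hnn (x, y)) (Finset.mem_univ y)).trans_eq (hνx x)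
    have hν0μ : ∀ x y, ν x = 0 → μ (x, y) = 0 := fun x y hx =>
      le_antisymm (hx ▸ hμν x y) (hnn (x, y))
    have hν0γ : ∀ x x', ν x = 0 → γ (x, x') = 0 := by
      intro x x' hx
      have h1 := hγ1 x
      rw [hx] at h1
      exact (Finset.sum_eq_zero_iff_of_nonneg fun x' _ => hγ0 (x, x')).mp h1 x' (Finset.mem_univ x')
    have hterm : ∀ x, ν x = 0 → ∀ x' y, γ (x, x') * μ (x, y) / ν x = 0 := by
      intro x hx x' y
      rw [hν0γ x x' hx]
      simp
    set lam : 𝒳 → 𝒴 → ℝ := fun x' y => ∑ x, γ (x, x') * μ (x, y) / ν x with hlam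
    have hlam0 : ∀ x' y, 0 ≤ lam x' y := fun x' y =>
      Finset.sum_nonneg fun x _ => div_nonneg (mul_nonneg (hγ0 _) (hnn _)) (hν0 x)
    have hinner : ∀ x y, ∑ x', γ (x, x') * μ (x, y) / ν x = μ (x, y) := by
      intro x y
      rcases eq_or_ne (ν x) 0 with hx | hx
      · rw [Finset.sum_eq_zero fun x' _ => hterm x hx x' y]
        exact (hν0μ x y hx).symm
      · rw [← Finset.sum_div, ← Finset.sum_mul, hγ1 x, mul_comm (ν x) (μ (x, y)),
          mul_div_assoc, div_self hx, mul_one]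
    have hrow : ∀ y, ∑ x', lam x' y = 1 / K := by
      intro y
      rw [hlam]
      rw [Finset.sum_comm, Finset.sum_congr rfl fun x _ => hinner x y]
      exact hunif' y
    have hinner2 : ∀ x x', ∑ y, γ (x, x') * μ (x, y) / ν x = γ (x, x') := by
      intro x x'
      rcases eq_or_ne (ν x) 0 with hx | hx
      · rw [Finset.sum_eq_zero fun y _ => hterm x hx x' y]
        exact (hν0γ x x' hx).symm
      · rw [← Finset.sum_div, ← Finset.mul_sum, hνx x, mul_div_assoc, div_self hx, mul_one]
    have hcol : ∀ x', ∑ y, lam x' y = ν' x' := by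
      intro x'
      rw [hlam]
      rw [Finset.sum_comm, Finset.sum_congr rfl fun x _ => hinner2 x x']
      exact hγ2 x'
    set M := ∑ x', ∑ y, (if h (g x') ≠ y then lam x' y else 0) with hMdef
    set C := ∑ x', ∑ y, (if h (g x') = y then lam x' y else 0) with hCdef
    have hM : M ≤ adv := by
      have h1 : ∀ x' y, (if h (g x') ≠ y then lam x' y else 0)
          = ∑ x, (if h (g x') ≠ y then γ (x, x') * μ (x, y) / ν x else 0) := by
        intro x' y
        by_cases hc : h (g x') ≠ y
        · rw [if_pos hc]
          exact Finset.sum_congr rfl fun x _ => (if_pos hc).symm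
        · rw [if_neg hc]
          exact (Finset.sum_eq_zero fun x _ => if_neg hc).symm
      have hre : M = ∑ x, ∑ y, ∑ x',
          (if h (g x') ≠ y then γ (x, x') * μ (x, y) / ν x else 0) := by
        rw [hMdef]
        rw [Finset.sum_congr rfl fun x' _ => Finset.sum_congr rfl fun y _ => h1 x' y]
        rw [Finset.sum_comm]
        rw [Finset.sum_congr rfl fun y _ => Finset.sum_comm]
        rw [Finset.sum_comm]
      rw [hre, hadv, pr, Fintype.sum_prod_type]
      refine Finset.sum_le_sum fun x _ => Finset.sum_le_sum fun y _ => ?_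
      by_cases hE : (x, y) ∈ {p : 𝒳 × 𝒴 | ∃ x', dist x' p.1 ≤ ε ∧ h (g x') ≠ p.2}
      · rw [if_pos hE]
        calc ∑ x', (if h (g x') ≠ y then γ (x, x') * μ (x, y) / ν x else 0)
            ≤ ∑ x', γ (x, x') * μ (x, y) / ν x := by
              refine Finset.sum_le_sum fun x' _ => ?_
              by_cases hc : h (g x') ≠ y
              · rw [if_pos hc]
              · rw [if_neg hc]
                exact div_nonneg (mul_nonneg (hγ0 _) (hnn _)) (hν0 x)
          _ = μ (x, y) := hinner x y
      · rw [if_neg hE]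
        refine le_of_eq (Finset.sum_eq_zero fun x' _ => ?_)
        by_cases hc : h (g x') ≠ y
        · rw [if_pos hc]
          rcases eq_or_ne (γ (x, x')) 0 with h0 | h0
          · rw [h0, zero_mul, zero_div]
          · exact absurd ⟨x', by rw [dist_comm]; exact hγd (x, x') h0, hc⟩ hE
        · rw [if_neg hc]
    have hMC : M + C = 1 := by
      have h2 : ∀ x' y, (if h (g x') ≠ y then lam x' y else 0)
          + (if h (g x') = y then lam x' y else 0) = lam x' y := by
        intro x' y
        by_cases hc : h (g x') = y <;> simp [hc]
      rw [hMdef, hCdef, ← Finset.sum_add_distrib]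
      rw [Finset.sum_congr rfl fun x' _ => by
        rw [← Finset.sum_add_distrib, Finset.sum_congr rfl fun y _ => h2 x' y, hcol x']]
      exact hν'1
    set q : 𝒴 → ℝ := fun y => ∑ x', (if h (g x') = y then ν' x' else 0) with hqdef
    have hq0 : ∀ y, 0 ≤ q y := fun y => Finset.sum_nonneg fun x' _ => by
      by_cases hc : h (g x') = y <;> simp [hc, hν'0 x']
    have hq1 : ∀ y, q y ≤ 1 := by
      intro y
      rw [hqdef, ← hν'1]
      refine Finset.sum_le_sum fun x' _ => ?_
      by_cases hc : h (g x') = y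
      · rw [if_pos hc]
      · rw [if_neg hc]; exact hν'0 x'
    have hqsum : ∑ y, q y = 1 := by
      rw [hqdef, Finset.sum_comm]
      rw [Finset.sum_congr rfl fun x' _ => Finset.sum_ite_eq Finset.univ (h (g x')) fun _ => ν' x']
      simpa using hν'1
    have hCmin : C ≤ ∑ y, min (q y) (1 / K) := by
      rw [hCdef, Finset.sum_comm]
      refine Finset.sum_le_sum fun y _ => ?_
      apply le_min
      · refine Finset.sum_le_sum fun x' _ => ?_
        by_cases hc : h (g x') = y
        · rw [if_pos hc, if_pos hc, ← hcol x']
          exact Finset.single_le_sum (fun y' _ => hlam0 x' y') (Finset.mem_univ y)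
        · rw [if_neg hc, if_neg hc]
      · rw [← hrow y]
        refine Finset.sum_le_sum fun x' _ => ?_
        by_cases hc : h (g x') = y
        · rw [if_pos hc]
        · rw [if_neg hc]; exact hlam0 x' y
    have hqpr : ∀ y, q y = pr ν' {x | h (g x) = y} := by
      intro y
      rw [hqdef, pr]
      exact Finset.sum_congr rfl fun x _ => by simp only [Set.mem_setOf_eq]
    have hent : ∑ y, Real.negMulLog (q y) = entropy ν' (fun x => h (g x)) := by
      rw [entropy_eq]
      rw [← Finset.sum_subset (Finset.subset_univ
        (Finset.image (fun x => h (g x)) Finset.univ)) (fun y _ hy => ?_)]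
      · exact Finset.sum_congr rfl fun y _ => by rw [hqpr y]
      · have hz : pr ν' {x | h (g x) = y} = 0 := by
          rw [pr]
          refine Finset.sum_eq_zero fun x _ => ?_
          rw [if_neg]
          intro hxy
          exact hy (Finset.mem_image.mpr ⟨x, Finset.mem_univ x, hxy⟩)
        rw [hqpr y, hz, Real.negMulLog_zero]
    have hMadv : 1 - adv ≤ C := by linarith
    calc (1 - adv) * Real.log K
        ≤ C * Real.log K := mul_le_mul_of_nonneg_right hMadv hlogK.le
      _ ≤ (∑ y, min (q y) (1 / K)) * Real.log K :=
          mul_le_mul_of_nonneg_right hCmin hlogK.le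
      _ = ∑ y, min (q y) (1 / K) * Real.log K := by rw [Finset.sum_mul]
      _ ≤ ∑ y, (q y * Real.log 2 + Real.negMulLog (q y)) :=
          Finset.sum_le_sum fun y _ => key_min_le hK2 (hq0 y) (hq1 y)
      _ = Real.log 2 + entropy ν' (fun x => h (g x)) := by
          rw [Finset.sum_add_distrib, ← Finset.sum_mul, hqsum, one_mul, hent]
      _ ≤ MI ν' g + Real.log 2 := by
          rw [MI_eq_entropy]
          linarith [entropy_comp_le ν' hν'0 g h]
  -- ν itself lies in the ball (diagonal coupling)
  have hball : InWinfBall ν ν ε := by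
    refine ⟨fun p => if p.1 = p.2 then ν p.1 else 0, fun p => ?_, fun x => ?_, fun x' => ?_,
      fun p hp => ?_⟩
    · by_cases hc : p.1 = p.2 <;> simp [hc, hν0 p.1, hν0 p.2]
    · simp [Finset.sum_ite_eq]
    · simp [Finset.sum_ite_eq']
    · by_cases hc : p.1 = p.2
      · rw [hc, dist_self]; exact hε
      · exact absurd (if_neg hc) hp
  have hRVle : RV ν ε g ≤ MI ν g + Real.log 2 - (1 - adv) * Real.log K := by
    refine csSup_le ⟨0, ν, hν0, hν1, hball, (sub_self _).symm⟩ ?_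
    rintro r ⟨ν', h0, h1, hb, rfl⟩
    have := core ν' h0 h1 hb
    linarith
  have hfin : (1 - adv) * Real.log K ≤ MI ν g - RV ν ε g + Real.log 2 := by linarith
  have hdiv : 1 - adv ≤ (MI ν g - RV ν ε g + Real.log 2) / Real.log K :=
    (le_div_iff₀ hlogK).mpr hfin
  linarith
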